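/- In a game with a bisimulation equivalence ∼ respecting the partition and the gain functions, if there exists a subgame perfect equilibrium σ in (G, v₀) with gain profile p, then there exists a Nash equilibrium in the quotient game (G̃, [v₀]) with gain profile p. -/

import Mathlib

/-- A history: a finite path starting at `v0`. -/
def IsHist {V : Type} (E : V → V → Prop) (v0 : V) (h : List V) : Prop :=
  h.head? = some v0 ∧ h.Chain' E

/-- Last vertex of a history (with default `v0`). -/
def lastOf {V : Type} (v0 : V) (h : List V) : V := h.getLast?.getD v0

/-- A strategy profile `σ : P → List V → V` is valid if on every history it
proposes a successor of the last vertex. -/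
def ValidProfile {V P : Type} (E : V → V → Prop) (owner : V → P) (v0 : V)
    (σ : P → List V → V) : Prop :=
  ∀ h, IsHist E v0 h → E (lastOf v0 h) (σ (owner (lastOf v0 h)) h)

/-- The successive histories produced by playing `σ` after the history `h0`. -/
def outHistFrom {V P : Type} (owner : V → P) (σ : P → List V → V) (v0 : V) (h0 : List V) :
    ℕ → List V
  | 0 => h0
  | n + 1 =>
      outHistFrom owner σ v0 h0 n ++
        [σ (owner (lastOf v0 (outHistFrom owner σ v0 h0 n))) (outHistFrom owner σ v0 h0 n)]

/-- The infinite play obtained by the history `h0` followed by the outcome of `σ`. -/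
def playFrom {V P : Type} (owner : V → P) (σ : P → List V → V) (v0 : V) (h0 : List V)
    (n : ℕ) : V :=
  (outHistFrom owner σ v0 h0 (n + 1)).getD n v0

/-- The outcome of the strategy profile `σ` from `v0`. -/
def outcomeSeq {V P : Type} (owner : V → P) (σ : P → List V → V) (v0 : V) : ℕ → V :=
  playFrom owner σ v0 [v0]

/-- `σ` is a Nash equilibrium from `v0`: no player has a profitable deviation. -/
def IsNE {V P : Type} [DecidableEq P] (E : V → V → Prop) (owner : V → P) (v0 : V)
    (Gain : P → (ℕ → V) → Prop) (σ : P → List V → V) : Prop :=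
  ∀ (i : P) (σ' : List V → V), (∀ h, IsHist E v0 h → E (lastOf v0 h) (σ' h)) →
    Gain i (outcomeSeq owner (Function.update σ i σ') v0) → Gain i (outcomeSeq owner σ v0)

/-- `σ` is a subgame perfect equilibrium from `v0`: after every history, no player has a
profitable deviation (gains being evaluated on the full play extending the history). -/
def IsSPE {V P : Type} [DecidableEq P] (E : V → V → Prop) (owner : V → P) (v0 : V)
    (Gain : P → (ℕ → V) → Prop) (σ : P → List V → V) : Prop :=
  ∀ h0, IsHist E v0 h0 →
    ∀ (i : P) (σ' : List V → V), (∀ h, IsHist E v0 h → E (lastOf v0 h) (σ' h)) →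
      Gain i (playFrom owner (Function.update σ i σ') v0 h0) →
      Gain i (playFrom owner σ v0 h0)

/-- `σ` is uniform w.r.t. the relation `r`: on componentwise `r`-related histories,
each player's choices are `r`-related. -/
def Uniform {V P : Type} (E : V → V → Prop) (v0 : V) (r : V → V → Prop)
    (σ : P → List V → V) : Prop :=
  ∀ (i : P) (h h' : List V), IsHist E v0 h → IsHist E v0 h' → List.Forall₂ r h h' →
    r (σ i h) (σ i h')

/-- Edges of the quotient game. -/
def QEdge {V : Type} (s : Setoid V) (E : V → V → Prop) :
    Quotient s → Quotient s → Prop :=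
  fun c c' => ∃ v v', Quotient.mk s v = c ∧ Quotient.mk s v' = c' ∧ E v v'

namespace Stmt19Aux

theorem lastOf_concat {V : Type} (v0 : V) (g : List V) (w : V) : lastOf v0 (g ++ [w]) = w := by
  simp [lastOf]

theorem isHist_ne_nil {V : Type} {E : V → V → Prop} {v0 : V} {h : List V}
    (hh : IsHist E v0 h) : h ≠ [] := by
  rintro rfl; simp [IsHist] at hh

theorem getLast?_eq {V : Type} {v0 : V} {g : List V} (hne : g ≠ []) :
    g.getLast? = some (lastOf v0 g) := by
  rw [List.getLast?_eq_getLast hne]; simp [lastOf, List.getLast?_eq_getLast hne]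

theorem isHist_concat {V : Type} {E : V → V → Prop} {v0 : V} {g : List V} {w : V}
    (hg : IsHist E v0 g) (hw : E (lastOf v0 g) w) : IsHist E v0 (g ++ [w]) := by
  obtain ⟨h1, h2⟩ := hg
  have hne : g ≠ [] := by rintro rfl; simp at h1
  constructor
  · cases g with
    | nil => exact absurd rfl hne
    | cons a t => simpa using h1
  · unfold List.Chain'; rw [List.isChain_append]
    refine ⟨h2, List.isChain_singleton _, ?_⟩
    intro x hx y hy
    rw [getLast?_eq (v0 := v0) hne] at hx
    simp at hx hy
    rw [← hx, ← hy]; exact hw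

theorem isHist_of_concat {V : Type} {E : V → V → Prop} {v0 : V} {g : List V} {c : V}
    (hh : IsHist E v0 (g ++ [c])) (hne : g ≠ []) :
    IsHist E v0 g ∧ E (lastOf v0 g) c := by
  obtain ⟨h1, h2⟩ := hh
  unfold List.Chain' at h2; rw [List.isChain_append] at h2
  obtain ⟨hg, -, hlast⟩ := h2
  refine ⟨⟨?_, hg⟩, ?_⟩
  · cases g with
    | nil => exact absurd rfl hne
    | cons a t => simpa using h1
  · exact hlast _ (by rw [Option.mem_def, getLast?_eq (v0 := v0) hne]) c (by simp)

theorem lastOf_map {V W : Type} (f : V → W) (v0 : V) (h : List V) :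
    lastOf (f v0) (List.map f h) = f (lastOf v0 h) := by
  cases h with
  | nil => simp [lastOf]
  | cons a t =>
      have hne : (a :: t) ≠ ([] : List V) := by simp
      have h2 : (List.map f (a :: t)).getLast? = some (f (lastOf v0 (a :: t))) := by
        rw [List.getLast?_map, getLast?_eq (v0 := v0) hne]; rfl
      show (List.map f (a :: t)).getLast?.getD (f v0) = _
      rw [h2]; rfl

theorem isHist_map {V W : Type} {E : V → V → Prop} {Q : W → W → Prop} {f : V → W}
    (hf : ∀ v w, E v w → Q (f v) (f w)) {v0 : V} {h : List V}
    (hh : IsHist E v0 h) : IsHist Q (f v0) (List.map f h) := by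
  obtain ⟨h1, h2⟩ := hh
  constructor
  · cases h with
    | nil => simp at h1
    | cons a t => simp at h1 ⊢; rw [h1]
  · unfold List.Chain' at h2 ⊢; rw [List.isChain_map]; exact h2.imp hf

theorem outHist_isHist {V P : Type} {E : V → V → Prop} {owner : V → P} {v0 : V}
    {σ : P → List V → V} (hσ : ValidProfile E owner v0 σ) {h0 : List V}
    (hh : IsHist E v0 h0) : ∀ n, IsHist E v0 (outHistFrom owner σ v0 h0 n)
  | 0 => hh
  | n + 1 => isHist_concat (outHist_isHist hσ hh n)
      (hσ _ (outHist_isHist hσ hh n))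

theorem outHist_length {V P : Type} (owner : V → P) (σ : P → List V → V) (v0 : V)
    (h0 : List V) : ∀ n, (outHistFrom owner σ v0 h0 n).length = h0.length + n
  | 0 => rfl
  | n + 1 => by
      simp [outHistFrom, outHist_length owner σ v0 h0 n]; ring

theorem getD_map_of_lt {V W : Type} (f : V → W) (H : List V) (n : ℕ) (h : n < H.length)
    (d : V) (d' : W) : (List.map f H).getD n d' = f (H.getD n d) := by
  rw [List.getD_eq_getElem?_getD, List.getD_eq_getElem?_getD, List.getElem?_map,
    List.getElem?_eq_getElem h]
  rfl


open Classical in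
noncomputable def pickM {V P : Type} (E : V → V → Prop) (owner : V → P) (v0 : V)
    (s : Setoid V) (σ : P → List V → V) (g : List V) (c : Quotient s) : V :=
  if Quotient.mk s (σ (owner (lastOf v0 g)) g) = c then σ (owner (lastOf v0 g)) g
  else if h2 : ∃ w, E (lastOf v0 g) w ∧ Quotient.mk s w = c then h2.choose else v0

theorem pick_spec {V P : Type} {E : V → V → Prop} {owner : V → P} {v0 : V}
    {s : Setoid V} {σ : P → List V → V}
    (hbisim : ∀ v v' w, s.r v v' → E v w → ∃ w', E v' w' ∧ s.r w w')
    (hσ : ValidProfile E owner v0 σ) {g : List V} (hg : IsHist E v0 g)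
    {c : Quotient s} (hc : QEdge s E (Quotient.mk s (lastOf v0 g)) c) :
    E (lastOf v0 g) (pickM E owner v0 s σ g c) ∧
      Quotient.mk s (pickM E owner v0 s σ g c) = c := by
  have hex : ∃ w, E (lastOf v0 g) w ∧ Quotient.mk s w = c := by
    obtain ⟨v, v', hv, hv', hE⟩ := hc
    obtain ⟨w, hEw, hrw⟩ := hbisim v (lastOf v0 g) v' (Quotient.exact hv) hE
    exact ⟨w, hEw, by rw [← hv']; exact Quotient.sound (s.symm hrw)⟩
  unfold pickM
  split
  · next h1 => exact ⟨hσ g hg, h1⟩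
  · next h1 =>
      exact ⟨hex.choose_spec.1, hex.choose_spec.2⟩

def liftA {V : Type} {s : Setoid V} (pick : List V → Quotient s → V) :
    List V → List (Quotient s) → List V
  | acc, [] => acc
  | acc, c :: rest => liftA pick (acc ++ [pick acc c]) rest

theorem liftA_concat {V : Type} {s : Setoid V} (pick : List V → Quotient s → V)
    (l : List (Quotient s)) (c : Quotient s) : ∀ acc : List V,
    liftA pick acc (l ++ [c]) = liftA pick acc l ++ [pick (liftA pick acc l) c] := by
  induction l with
  | nil => intro acc; rfl
  | cons d rest ih => intro acc; simp only [List.cons_append, liftA]; exact ih _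

noncomputable def liftL {V P : Type} (E : V → V → Prop) (owner : V → P) (v0 : V)
    (s : Setoid V) (σ : P → List V → V) : List (Quotient s) → List V
  | [] => []
  | _ :: rest => liftA (pickM E owner v0 s σ) [v0] rest

theorem liftL_concat {V P : Type} (E : V → V → Prop) (owner : V → P) (v0 : V)
    (s : Setoid V) (σ : P → List V → V) {l : List (Quotient s)} (hne : l ≠ [])
    (c : Quotient s) :
    liftL E owner v0 s σ (l ++ [c]) =
      liftL E owner v0 s σ l ++
        [pickM E owner v0 s σ (liftL E owner v0 s σ l) c] := by
  cases l with
  | nil => exact absurd rfl hne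
  | cons d rest => simp only [List.cons_append, liftL]; exact liftA_concat _ rest c [v0]

theorem lift_spec {V P : Type} {E : V → V → Prop} {owner : V → P} {v0 : V}
    {s : Setoid V} {σ : P → List V → V}
    (hbisim : ∀ v v' w, s.r v v' → E v w → ∃ w', E v' w' ∧ s.r w w')
    (hσ : ValidProfile E owner v0 σ) :
    ∀ ht : List (Quotient s), IsHist (QEdge s E) (Quotient.mk s v0) ht →
      IsHist E v0 (liftL E owner v0 s σ ht) ∧
        List.map (Quotient.mk s) (liftL E owner v0 s σ ht) = ht := by
  intro ht
  induction ht using List.reverseRecOn with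
  | nil => intro hh; exact absurd (isHist_ne_nil hh) (by simp)
  | append_singleton l c ih =>
      intro hh
      rcases eq_or_ne l [] with rfl | hne
      · have hc : c = Quotient.mk s v0 := by
          obtain ⟨h1, -⟩ := hh; simp at h1; exact h1
        subst hc
        exact ⟨⟨rfl, List.isChain_singleton _⟩, rfl⟩
      · obtain ⟨hl, hedge⟩ := isHist_of_concat hh hne
        obtain ⟨hlift, hmap⟩ := ih hl
        have hlast := lastOf_map (Quotient.mk s) v0 (liftL E owner v0 s σ l)
        rw [hmap] at hlast
        rw [hlast] at hedge
        obtain ⟨he, hq⟩ := pick_spec hbisim hσ hlift hedge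
        rw [liftL_concat E owner v0 s σ hne c]
        exact ⟨isHist_concat hlift he, by rw [List.map_append, hmap]; simp [hq]⟩


theorem corr {V P : Type} {E : V → V → Prop} {owner : V → P} {v0 : V}
    {s : Setoid V} {σ : P → List V → V}
    {qowner : Quotient s → P}
    (T : P → List (Quotient s) → Quotient s) (S : P → List V → V)
    (hT : ValidProfile (QEdge s E) qowner (Quotient.mk s v0) T)
    (hcond : ∀ ht : List (Quotient s), IsHist (QEdge s E) (Quotient.mk s v0) ht →
      S (owner (lastOf v0 (liftL E owner v0 s σ ht))) (liftL E owner v0 s σ ht)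
        = pickM E owner v0 s σ (liftL E owner v0 s σ ht)
            (T (qowner (lastOf (Quotient.mk s v0) ht)) ht)) :
    ∀ n, liftL E owner v0 s σ
        (outHistFrom qowner T (Quotient.mk s v0) [Quotient.mk s v0] n)
      = outHistFrom owner S v0 [v0] n := by
  intro n
  induction n with
  | zero => rfl
  | succ n ih =>
      have hq0 : IsHist (QEdge s E) (Quotient.mk s v0) [Quotient.mk s v0] :=
        ⟨rfl, List.isChain_singleton _⟩
      have hHt := outHist_isHist hT hq0 n
      have hne := isHist_ne_nil hHt
      show liftL E owner v0 s σ (_ ++ [_]) = _ ++ [_]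
      rw [liftL_concat E owner v0 s σ hne, ← hcond _ hHt, ih]

theorem corr_out {V P : Type} {E : V → V → Prop} {owner : V → P} {v0 : V}
    {s : Setoid V} {σ : P → List V → V}
    (hbisim : ∀ v v' w, s.r v v' → E v w → ∃ w', E v' w' ∧ s.r w w')
    (hσ : ValidProfile E owner v0 σ)
    {qowner : Quotient s → P}
    (T : P → List (Quotient s) → Quotient s) (S : P → List V → V)
    (hT : ValidProfile (QEdge s E) qowner (Quotient.mk s v0) T)
    (hcond : ∀ ht : List (Quotient s), IsHist (QEdge s E) (Quotient.mk s v0) ht →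
      S (owner (lastOf v0 (liftL E owner v0 s σ ht))) (liftL E owner v0 s σ ht)
        = pickM E owner v0 s σ (liftL E owner v0 s σ ht)
            (T (qowner (lastOf (Quotient.mk s v0) ht)) ht)) :
    ∀ n, outcomeSeq qowner T (Quotient.mk s v0) n
      = Quotient.mk s (outcomeSeq owner S v0 n) := by
  intro n
  have hq0 : IsHist (QEdge s E) (Quotient.mk s v0) [Quotient.mk s v0] :=
    ⟨rfl, List.isChain_singleton _⟩
  have h1 := corr T S hT hcond (n + 1)
  have h2 := (lift_spec hbisim hσ _ (outHist_isHist hT hq0 (n + 1))).2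
  rw [h1] at h2
  show (outHistFrom qowner T (Quotient.mk s v0) [Quotient.mk s v0] (n + 1)).getD n _
    = Quotient.mk s ((outHistFrom owner S v0 [v0] (n + 1)).getD n v0)
  rw [← h2]
  exact getD_map_of_lt _ _ n (by rw [outHist_length]; simp; omega) v0 _


theorem pickM_self {V P : Type} (E : V → V → Prop) (owner : V → P) (v0 : V)
    (s : Setoid V) (σ : P → List V → V) (g : List V) :
    pickM E owner v0 s σ g (Quotient.mk s (σ (owner (lastOf v0 g)) g))
      = σ (owner (lastOf v0 g)) g := by
  unfold pickM
  split
  · rfl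
  · next h => exact absurd rfl h

noncomputable def qStrat {V P : Type} (E : V → V → Prop) (owner : V → P) (v0 : V)
    (s : Setoid V) (σ : P → List V → V) : P → List (Quotient s) → Quotient s :=
  fun j ht => Quotient.mk s (σ j (liftL E owner v0 s σ ht))

noncomputable def devStrat {V P : Type} (E : V → V → Prop) (owner : V → P) (v0 : V)
    (s : Setoid V) (σ : P → List V → V) (τ' : List (Quotient s) → Quotient s) :
    List V → V :=
  fun h => pickM E owner v0 s σ h (τ' (List.map (Quotient.mk s) h))

end Stmt19Aux

open Stmt19Aux

/-- If a game with a bisimulation equivalence respecting the partition and the gain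
functions has an SPE with gain profile `p`, then its quotient game has a Nash
equilibrium with gain profile `p`. -/
theorem stmt19 {V P : Type} [DecidableEq P] (E : V → V → Prop) (owner : V → P) (v0 : V)
    (Gain : P → (ℕ → V) → Prop) (s : Setoid V)
    (hbisim : ∀ v v' w, s.r v v' → E v w → ∃ w', E v' w' ∧ s.r w w')
    (hpart : ∀ v v', s.r v v' → owner v = owner v')
    (qowner : Quotient s → P) (hqowner : ∀ v, qowner (Quotient.mk s v) = owner v)
    (qGain : P → (ℕ → Quotient s) → Prop)
    (hgain₁ : ∀ (i : P) (ρ ρ' : ℕ → V), (∀ n, s.r (ρ n) (ρ' n)) → (Gain i ρ ↔ Gain i ρ'))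
    (hgain₂ : ∀ (i : P) (ρ : ℕ → V) (ρt : ℕ → Quotient s),
      (∀ n, Quotient.mk s (ρ n) = ρt n) → (Gain i ρ ↔ qGain i ρt))
    (p : P → Prop)
    (hexists : ∃ σ : P → List V → V, ValidProfile E owner v0 σ ∧
      IsSPE E owner v0 Gain σ ∧ ∀ i, Gain i (outcomeSeq owner σ v0) ↔ p i) :
    ∃ τ : P → List (Quotient s) → Quotient s,
      ValidProfile (QEdge s E) qowner (Quotient.mk s v0) τ ∧
      IsNE (QEdge s E) qowner (Quotient.mk s v0) qGain τ ∧
      ∀ i, qGain i (outcomeSeq qowner τ (Quotient.mk s v0)) ↔ p i := by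
  obtain ⟨σ, hσv, hσspe, hσp⟩ := hexists
  have lastmk : ∀ ht : List (Quotient s), IsHist (QEdge s E) (Quotient.mk s v0) ht →
      lastOf (Quotient.mk s v0) ht
        = Quotient.mk s (lastOf v0 (liftL E owner v0 s σ ht)) := by
    intro ht hht
    have h := lastOf_map (Quotient.mk s) v0 (liftL E owner v0 s σ ht)
    rw [(lift_spec hbisim hσv ht hht).2] at h
    exact h
  have hqvalid : ValidProfile (QEdge s E) qowner (Quotient.mk s v0)
      (qStrat E owner v0 s σ) := by
    intro ht hht
    have hl := (lift_spec hbisim hσv ht hht).1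
    rw [lastmk ht hht, hqowner]
    exact ⟨_, _, rfl, rfl, hσv _ hl⟩
  have hcond_a : ∀ ht : List (Quotient s), IsHist (QEdge s E) (Quotient.mk s v0) ht →
      σ (owner (lastOf v0 (liftL E owner v0 s σ ht))) (liftL E owner v0 s σ ht)
        = pickM E owner v0 s σ (liftL E owner v0 s σ ht)
            (qStrat E owner v0 s σ (qowner (lastOf (Quotient.mk s v0) ht)) ht) := by
    intro ht hht
    rw [lastmk ht hht, hqowner]
    exact (pickM_self E owner v0 s σ (liftL E owner v0 s σ ht)).symm
  have outcome_a := corr_out hbisim hσv (qStrat E owner v0 s σ) σ hqvalid hcond_a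
  refine ⟨qStrat E owner v0 s σ, hqvalid, ?_, ?_⟩
  · -- Nash equilibrium
    intro i τ' hτ' hg
    have hDvalid : ∀ h, IsHist E v0 h →
        E (lastOf v0 h) (devStrat E owner v0 s σ τ' h) := by
      intro h hh
      have hmh : IsHist (QEdge s E) (Quotient.mk s v0) (List.map (Quotient.mk s) h) :=
        isHist_map (fun v w hE => ⟨v, w, rfl, rfl, hE⟩) hh
      have hQ := hτ' _ hmh
      rw [lastOf_map] at hQ
      exact (pick_spec hbisim hσv hh hQ).1
    have hTvalid : ValidProfile (QEdge s E) qowner (Quotient.mk s v0)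
        (Function.update (qStrat E owner v0 s σ) i τ') := by
      intro ht hht
      rcases eq_or_ne (qowner (lastOf (Quotient.mk s v0) ht)) i with hj | hj
      · rw [hj, Function.update_self]; exact hτ' ht hht
      · rw [Function.update_of_ne hj]; exact hqvalid ht hht
    have hcond_b : ∀ ht : List (Quotient s), IsHist (QEdge s E) (Quotient.mk s v0) ht →
        Function.update σ i (devStrat E owner v0 s σ τ')
            (owner (lastOf v0 (liftL E owner v0 s σ ht))) (liftL E owner v0 s σ ht)
          = pickM E owner v0 s σ (liftL E owner v0 s σ ht)
              (Function.update (qStrat E owner v0 s σ) i τ'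
                (qowner (lastOf (Quotient.mk s v0) ht)) ht) := by
      intro ht hht
      rw [lastmk ht hht, hqowner]
      rcases eq_or_ne (owner (lastOf v0 (liftL E owner v0 s σ ht))) i with hj | hj
      · rw [hj]
        simp only [Function.update_self]
        show pickM E owner v0 s σ _
            (τ' (List.map (Quotient.mk s) (liftL E owner v0 s σ ht))) = _
        rw [(lift_spec hbisim hσv ht hht).2]
      · rw [Function.update_of_ne hj, Function.update_of_ne hj]
        exact (pickM_self E owner v0 s σ (liftL E owner v0 s σ ht)).symm
    have outcome_b := corr_out hbisim hσv
      (Function.update (qStrat E owner v0 s σ) i τ')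
      (Function.update σ i (devStrat E owner v0 s σ τ')) hTvalid hcond_b
    have hGdev : Gain i (outcomeSeq owner
        (Function.update σ i (devStrat E owner v0 s σ τ')) v0) :=
      (hgain₂ i _ _ (fun n => (outcome_b n).symm)).mpr hg
    have hGσ : Gain i (outcomeSeq owner σ v0) :=
      hσspe [v0] ⟨rfl, List.isChain_singleton _⟩ i (devStrat E owner v0 s σ τ')
        hDvalid hGdev
    exact (hgain₂ i _ _ (fun n => (outcome_a n).symm)).mp hGσ
  · -- gain profile
    intro i
    exact (hgain₂ i _ _ (fun n => (outcome_a n).symm)).symm.trans (hσp i)
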